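/- For integer k ≥ 2, the characteristic polynomial of the dendrimer d(2, k) equals x^{(k−1)²} · (x² − k + 1)^{k−1} · (x² − 2k + 1). -/

import Mathlib

open Polynomial Matrix

section aux
variable {K : Type*} [Field K]

private noncomputable def smul_one_invertible {m : Type*} [Fintype m] [DecidableEq m] {u : K} (hu : u ≠ 0) :
    Invertible (u • (1 : Matrix m m K)) :=
  ⟨u⁻¹ • 1, by simp [Matrix.smul_mul, Matrix.mul_smul, smul_smul, inv_mul_cancel₀ hu,
      mul_inv_cancel₀ hu],
    by simp [Matrix.smul_mul, Matrix.mul_smul, smul_smul, inv_mul_cancel₀ hu,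
      mul_inv_cancel₀ hu]⟩


private lemma dend_key (m : ℕ) (x y a b : K) (ha : x ^ 2 - a ≠ 0)
    (hy : y * x = x ^ 2 - a) (hb : b = a + (m + 2 : ℕ)) :
    x ^ ((2 + m) * (m + 1)) * (y ^ (2 + m) * (x - (2 + m : ℕ) * y⁻¹)) =
      x ^ ((m + 1) ^ 2) * (x ^ 2 - a) ^ (m + 1) * (x ^ 2 - b) := by
  have hy0 : y ≠ 0 := by
    intro h; rw [h, zero_mul] at hy; exact ha hy.symm
  have h1 : y * (x - (2 + m : ℕ) * y⁻¹) = x ^ 2 - b := by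
    have : y * (x - (2 + m : ℕ) * y⁻¹) = y * x - (2 + m : ℕ) * (y * y⁻¹) := by ring
    rw [this, mul_inv_cancel₀ hy0, hy, hb]; push_cast; ring
  have h2 : y ^ (m + 1) * x ^ (m + 1) = (x ^ 2 - a) ^ (m + 1) := by
    rw [← mul_pow, hy]
  calc x ^ ((2 + m) * (m + 1)) * (y ^ (2 + m) * (x - (2 + m : ℕ) * y⁻¹))
      = x ^ ((m + 1) ^ 2) * ((y ^ (m + 1) * x ^ (m + 1)) *
          (y * (x - (2 + m : ℕ) * y⁻¹))) := by
        rw [show (2 + m) * (m + 1) = (m + 1) ^ 2 + (m + 1) by ring, pow_add,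
          show 2 + m = (m + 1) + 1 by ring, pow_succ]
        ring
    _ = _ := by rw [h1, h2]; ring

private lemma dend_count {k d : ℕ} (hd : 0 < d) {u : ℕ} (hu : u < k) :
    ∑ i : Fin (k * d), (if (i : ℕ) / d = u then (1 : K) else 0) = (d : K) := by
  rw [Fin.sum_univ_eq_sum_range (fun i => if i / d = u then (1 : K) else 0) (k * d)]
  rw [Finset.sum_boole]
  have hfil : (Finset.range (k * d)).filter (fun i => i / d = u) =
      Finset.Ico (u * d) (u * d + d) := by
    ext i
    simp only [Finset.mem_filter, Finset.mem_range, Finset.mem_Ico]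
    constructor
    · rintro ⟨hi, rfl⟩
      have h1 : d * (i / d) + i % d = i := Nat.div_add_mod i d
      have h2 : i % d < d := Nat.mod_lt _ hd
      constructor
      · rw [mul_comm]; omega
      · rw [mul_comm]; omega
    · rintro ⟨h1, h2⟩
      have hdiv : i / d = u := by
        apply Nat.div_eq_of_lt_le h1
        rwa [Nat.succ_mul]
      refine ⟨?_, hdiv⟩
      have : u * d + d = (u + 1) * d := by ring
      calc i < u * d + d := h2
        _ = (u + 1) * d := by ring
        _ ≤ k * d := Nat.mul_le_mul_right d hu
  rw [hfil, Nat.card_Ico]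
  simp

private lemma dend_bb {k d : ℕ} (hd : 0 < d) (u u' : Fin k) :
    ∑ i : Fin (k * d), (if (i : ℕ) / d = (u : ℕ) then (-1 : K) else 0) *
      (if (i : ℕ) / d = (u' : ℕ) then (-1 : K) else 0) =
      if u = u' then (d : K) else 0 := by
  rcases eq_or_ne u u' with rfl | h
  · rw [if_pos rfl]
    have : ∀ i : Fin (k * d), (if (i : ℕ) / d = (u : ℕ) then (-1 : K) else 0) *
        (if (i : ℕ) / d = (u : ℕ) then (-1 : K) else 0) =
        (if (i : ℕ) / d = (u : ℕ) then (1 : K) else 0) := by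
      intro i; split_ifs <;> ring
    rw [Finset.sum_congr rfl fun i _ => this i]
    exact dend_count hd u.isLt
  · rw [if_neg h]
    apply Finset.sum_eq_zero
    intro i _
    split_ifs with h1 h2
    · exact absurd (Fin.val_injective (h1.symm.trans h2)) h
    all_goals ring

end aux

private def dendEquiv (k : ℕ) (n : ℕ → ℕ) (h0 : n 0 = 1) (h1 : n 1 = k)
    (h2 : n 2 = k * (k - 1)) :
    ((Fin 1 ⊕ Fin k) ⊕ Fin (k * (k - 1))) ≃ ((j : Fin 3) × Fin (n j.1)) where
  toFun v := match v with
    | .inl (.inl i) => ⟨⟨0, by omega⟩, Fin.cast h0.symm i⟩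
    | .inl (.inr u) => ⟨⟨1, by omega⟩, Fin.cast h1.symm u⟩
    | .inr w => ⟨⟨2, by omega⟩, Fin.cast h2.symm w⟩
  invFun v := match v with
    | ⟨⟨0, _⟩, x⟩ => .inl (.inl (Fin.cast h0 x))
    | ⟨⟨1, _⟩, x⟩ => .inl (.inr (Fin.cast h1 x))
    | ⟨⟨2, _⟩, x⟩ => .inr (Fin.cast h2 x)
  left_inv := by rintro ((i | u) | w) <;> rfl
  right_inv := by
    rintro ⟨⟨j, hj⟩, x⟩
    interval_cases j <;> rfl

set_option maxHeartbeats 1000000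
set_option synthInstance.maxHeartbeats 400000

private lemma dendEquiv_apply₀ {k : ℕ} {n : ℕ → ℕ} (h0 : n 0 = 1) (h1 : n 1 = k)
    (h2 : n 2 = k * (k - 1)) (i : Fin 1) :
    dendEquiv k n h0 h1 h2 (.inl (.inl i)) = ⟨⟨0, by omega⟩, Fin.cast h0.symm i⟩ := rfl

private lemma dendEquiv_apply₁ {k : ℕ} {n : ℕ → ℕ} (h0 : n 0 = 1) (h1 : n 1 = k)
    (h2 : n 2 = k * (k - 1)) (u : Fin k) :
    dendEquiv k n h0 h1 h2 (.inl (.inr u)) = ⟨⟨1, by omega⟩, Fin.cast h1.symm u⟩ := rfl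

private lemma dendEquiv_apply₂ {k : ℕ} {n : ℕ → ℕ} (h0 : n 0 = 1) (h1 : n 1 = k)
    (h2 : n 2 = k * (k - 1)) (w : Fin (k * (k - 1))) :
    dendEquiv k n h0 h1 h2 (.inr w) = ⟨⟨2, by omega⟩, Fin.cast h2.symm w⟩ := rfl

theorem dendrimer_two_charpoly (k : ℕ) (hk : 2 ≤ k)
    (c n : ℕ → ℕ) (hc1 : c 1 = k) (hc2 : c 2 = k - 1)
    (hn0 : n 0 = 1) (hn1 : n 1 = k) (hn2 : n 2 = k * (k - 1))
    (A : Matrix ((j : Fin 3) × Fin (n j.1)) ((j : Fin 3) × Fin (n j.1)) ℝ)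
    (hA : ∀ v w : (j : Fin 3) × Fin (n j.1),
      A v w = if (v.1.1 = w.1.1 + 1 ∧ v.2.1 / c v.1.1 = w.2.1) ∨
                 (w.1.1 = v.1.1 + 1 ∧ w.2.1 / c w.1.1 = v.2.1) then 1 else 0) :
    A.charpoly = Polynomial.X ^ ((k - 1) ^ 2) *
      (Polynomial.X ^ 2 - Polynomial.C ((k : ℝ) - 1)) ^ (k - 1) *
      (Polynomial.X ^ 2 - Polynomial.C (2 * (k : ℝ) - 1)) := by

  set φ : ℝ[X] →+* RatFunc ℝ := (algebraMap ℝ[X] (RatFunc ℝ) : ℝ[X] →+* RatFunc ℝ) with hφ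
  apply RatFunc.algebraMap_injective ℝ
  set x : RatFunc ℝ := φ X with hx_def
  set a : RatFunc ℝ := (k : RatFunc ℝ) - 1 with ha_def
  set b : RatFunc ℝ := 2 * (k : RatFunc ℝ) - 1 with hb_def
  have hx : x ≠ 0 := RatFunc.algebraMap_ne_zero X_ne_zero
  have ha : x ^ 2 - a ≠ 0 := by
    have : x ^ 2 - a = φ (X ^ 2 - C ((k : ℝ) - 1)) := by
      simp [hx_def, ha_def, map_sub, map_pow, hφ, RatFunc.algebraMap_C]
    rw [this]
    exact RatFunc.algebraMap_ne_zero (X_pow_sub_C_ne_zero two_pos _)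
  set y : RatFunc ℝ := x - a * x⁻¹ with hy_def
  have hy : y * x = x ^ 2 - a := by
    rw [hy_def]; field_simp
  have hy0 : y ≠ 0 := by
    intro h; rw [h, zero_mul] at hy; exact ha hy.symm
  set e := dendEquiv k n hn0 hn1 hn2 with he
  -- blocks
  set B : Matrix (Fin 1 ⊕ Fin k) (Fin (k * (k - 1))) (RatFunc ℝ) :=
    of fun v i => match v with
      | .inl _ => 0
      | .inr u => if (i : ℕ) / (k - 1) = (u : ℕ) then -1 else 0 with hB
  set A₁ : Matrix (Fin 1 ⊕ Fin k) (Fin 1 ⊕ Fin k) (RatFunc ℝ) :=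
    fromBlocks (of fun _ _ => x) (of fun _ _ => -1) (of fun _ _ => -1) (x • 1) with hA₁
  have hblocks : ((charmatrix A).map φ).submatrix e e = fromBlocks A₁ B Bᵀ (x • 1) := by
    ext v w
    rcases v with ((i | u) | p) <;> rcases w with ((i' | u') | p') <;>
      simp only [Matrix.submatrix_apply, Matrix.map_apply, he,
        dendEquiv_apply₀, dendEquiv_apply₁, dendEquiv_apply₂,
        fromBlocks_apply₁₁, fromBlocks_apply₁₂, fromBlocks_apply₂₁, fromBlocks_apply₂₂,
        charmatrix_apply, Matrix.diagonal_apply, hA, Matrix.transpose_apply,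
        Matrix.smul_apply, Matrix.one_apply, Sigma.mk.inj_iff, Fin.mk.injEq, heq_eq_eq,
        Fin.ext_iff, Fin.coe_cast, hc1, hc2] <;>
      simp -failIfUnchanged only [hA₁, hB, fromBlocks_apply₁₁, fromBlocks_apply₁₂,
        fromBlocks_apply₂₁, fromBlocks_apply₂₂, Matrix.smul_apply, Matrix.one_apply,
        Matrix.of_apply, Matrix.transpose_apply]
    · -- (root, root)
      norm_num [Fin.val_eq_zero, map_sub, hx_def]
    · -- (root, child)
      norm_num [Fin.val_eq_zero, Nat.div_eq_of_lt u'.isLt, map_sub]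
    · -- (root, leaf)
      rw [if_neg (fun hEq : (⟨⟨0, by omega⟩, Fin.cast hn0.symm i⟩ : (j : Fin 3) × Fin (n j.1)) =
          ⟨⟨2, by omega⟩, Fin.cast hn2.symm p'⟩ => by
            simpa using congrArg (fun s => (s.1 : Fin 3).1) hEq)]
      norm_num [map_sub]
    · -- (child, root)
      norm_num [Fin.val_eq_zero, Nat.div_eq_of_lt u.isLt, map_sub]
    · -- (child, child)
      rcases eq_or_ne u u' with rfl | h
      · norm_num [map_sub, hx_def]
      · rw [if_neg (by simpa [Fin.ext_iff] using h), if_neg (by omega),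
          if_neg (by simpa [Fin.ext_iff] using h)]
        norm_num
    · -- (child, leaf)
      rw [if_neg (fun hEq : (⟨⟨1, by omega⟩, Fin.cast hn1.symm u⟩ : (j : Fin 3) × Fin (n j.1)) =
          ⟨⟨2, by omega⟩, Fin.cast hn2.symm p'⟩ => by
            simpa using congrArg (fun s => (s.1 : Fin 3).1) hEq)]
      rcases eq_or_ne ((p' : ℕ) / (k - 1)) (u : ℕ) with hq | hq
      · norm_num [hq, map_sub]
      · norm_num [hq, map_sub]
    · -- (leaf, root)
      rw [if_neg (fun hEq : (⟨⟨2, by omega⟩, Fin.cast hn2.symm p⟩ : (j : Fin 3) × Fin (n j.1)) =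
          ⟨⟨0, by omega⟩, Fin.cast hn0.symm i'⟩ => by
            simpa using congrArg (fun s => (s.1 : Fin 3).1) hEq)]
      norm_num [map_sub]
    · -- (leaf, child)
      rw [if_neg (fun hEq : (⟨⟨2, by omega⟩, Fin.cast hn2.symm p⟩ : (j : Fin 3) × Fin (n j.1)) =
          ⟨⟨1, by omega⟩, Fin.cast hn1.symm u'⟩ => by
            simpa using congrArg (fun s => (s.1 : Fin 3).1) hEq)]
      rcases eq_or_ne ((p : ℕ) / (k - 1)) (u' : ℕ) with hq | hq
      · norm_num [hq, map_sub]
      · norm_num [hq, map_sub]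
    · -- (leaf, leaf)
      rcases eq_or_ne p p' with rfl | h
      · norm_num [map_sub, hx_def]
      · rw [if_neg (by simpa [Fin.ext_iff] using h), if_neg (by omega),
          if_neg (by simpa [Fin.ext_iff] using h)]
        norm_num
  have hdet1 : φ (A.charpoly) =
      (fromBlocks A₁ B Bᵀ (x • (1 : Matrix (Fin (k * (k - 1))) (Fin (k * (k - 1))) (RatFunc ℝ)))).det := by
    rw [show A.charpoly = (charmatrix A).det from rfl, RingHom.map_det,
      RingHom.mapMatrix_apply,
      ← Matrix.det_submatrix_equiv_self e ((charmatrix A).map φ), hblocks]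
  rw [hdet1]
  haveI : Invertible (x • (1 : Matrix (Fin (k * (k - 1))) (Fin (k * (k - 1))) (RatFunc ℝ))) :=
    smul_one_invertible hx
  rw [Matrix.det_fromBlocks₂₂]
  have hinv1 : ⅟(x • (1 : Matrix (Fin (k * (k - 1))) (Fin (k * (k - 1))) (RatFunc ℝ))) = x⁻¹ • 1 :=
    invOf_eq_right_inv (by
      simp [Matrix.smul_mul, Matrix.mul_smul, smul_smul, mul_inv_cancel₀ hx, inv_mul_cancel₀ hx])
  have hBB : B * Bᵀ = fromBlocks 0 0 0 ((((k : ℕ) - 1 : ℕ) : RatFunc ℝ) • 1) := by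
    have hd : 0 < k - 1 := by omega
    ext v w
    rcases v with (i | u) <;> rcases w with (i' | u') <;>
      simp only [Matrix.mul_apply, hB, Matrix.transpose_apply, fromBlocks_apply₁₁,
        fromBlocks_apply₁₂, fromBlocks_apply₂₁, fromBlocks_apply₂₂, Matrix.zero_apply,
        Matrix.smul_apply, Matrix.one_apply, smul_eq_mul, Matrix.of_apply]
    · simp
    · simp
    · simp
    · rw [dend_bb hd u u']
      split_ifs <;> simp
  have hschur : A₁ - B * ⅟(x • (1 : Matrix (Fin (k * (k - 1))) (Fin (k * (k - 1))) (RatFunc ℝ))) * Bᵀ =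
      fromBlocks (of fun _ _ => x) (of fun _ _ => -1) (of fun _ _ => -1) (y • 1) := by
    rw [hinv1, Matrix.mul_smul, Matrix.mul_one, Matrix.smul_mul, hBB]
    ext v w
    rcases v with (i | u) <;> rcases w with (i' | u') <;>
      simp only [Matrix.sub_apply, Matrix.smul_apply, hA₁, fromBlocks_apply₁₁,
        fromBlocks_apply₁₂, fromBlocks_apply₂₁, fromBlocks_apply₂₂, Matrix.zero_apply,
        Matrix.one_apply, smul_eq_mul, Matrix.of_apply]
    · ring
    · ring
    · ring
    · rcases eq_or_ne u u' with rfl | h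
      · simp only [if_pos rfl]
        have : (((k : ℕ) - 1 : ℕ) : RatFunc ℝ) = ((k : RatFunc ℝ) - 1) := by
          rw [Nat.cast_sub (by omega)]; norm_num
        rw [this]; ring
      · simp only [if_neg h]; ring
  rw [hschur]
  haveI : Invertible (y • (1 : Matrix (Fin k) (Fin k) (RatFunc ℝ))) := smul_one_invertible hy0
  rw [Matrix.det_fromBlocks₂₂]
  have hinv2 : ⅟(y • (1 : Matrix (Fin k) (Fin k) (RatFunc ℝ))) = y⁻¹ • 1 :=
    invOf_eq_right_inv (by
      simp [Matrix.smul_mul, Matrix.mul_smul, smul_smul, mul_inv_cancel₀ hy0, inv_mul_cancel₀ hy0])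
  rw [hinv2]
  rw [Matrix.det_fin_one]
  rw [Matrix.det_smul, Matrix.det_smul, Matrix.det_one, Matrix.det_one, Fintype.card_fin,
    Fintype.card_fin]
  have hCa : RatFunc.C ((k:ℝ) - 1) = ((k : RatFunc ℝ) - 1) := by
    simp only [map_sub, map_natCast, _root_.map_one]
  have hCb : RatFunc.C (2 * (k:ℝ) - 1) = (2 * (k : RatFunc ℝ) - 1) := by
    simp only [map_sub, _root_.map_mul, _root_.map_ofNat, map_natCast, _root_.map_one]
  have hrhs : (algebraMap ℝ[X] (RatFunc ℝ))
      (X ^ ((k - 1) ^ 2) * (X ^ 2 - C ((k:ℝ) - 1)) ^ (k - 1) * (X ^ 2 - C (2 * (k:ℝ) - 1))) =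
      x ^ ((k - 1) ^ 2) * (x ^ 2 - a) ^ (k - 1) * (x ^ 2 - b) := by
    simp only [_root_.map_mul, map_pow, map_sub, hφ, RatFunc.algebraMap_C, map_natCast,
      _root_.map_one, _root_.map_ofNat, ha_def, hb_def, hx_def]
  rw [hrhs]
  simp only [Matrix.sub_apply, Matrix.mul_apply, Matrix.smul_apply, Matrix.one_apply, Matrix.of_apply,
    mul_ite, mul_one, mul_zero, ite_mul, neg_mul, neg_neg, one_mul, zero_mul,
    Finset.sum_ite_eq, Finset.sum_ite_eq', Finset.mem_univ, if_true, Finset.sum_const,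
    Fintype.card_fin, nsmul_eq_mul, smul_eq_mul, Finset.sum_neg_distrib, Matrix.det_one,
    Finset.card_univ]
  have hb' : b = a + ((k : ℕ) : RatFunc ℝ) := by
    rw [ha_def, hb_def]; ring
  obtain ⟨m, hm⟩ := Nat.exists_eq_add_of_le hk
  subst hm
  have e1 : 2 + m - 1 = m + 1 := by omega
  rw [e1]
  have key := dend_key m x y a b ha hy (by rw [hb']; ring_nf)
  linear_combination key
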